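/- arXiv:2402.06180 — 5 statements merged into one kernel-verified Lean document; each statement's English description precedes it below -/
import Mathlib

section
/- Suppose the transition assumption holds (x_i(1) = A x_i(0) + B u_i for all i = 1,…,N_d) and the controller assumption holds (u_i = −K x_i(0) for all i ≤ N'_d). If the algebraic Riccati equation holds, i.e. G1 = A^T P A − P + Q − K^T (R + B^T P B) K = 0 and G2 = B^T P A − (R + B^T P B) K = 0, then f_{i,j} = 0 for every i ∈ {1,…,N'_d} and every j ∈ {1,…,N_d}. (Theorem 1) -/
open Matrix

lemma aux_mulVec_dot {p q r : ℕ} (M : Matrix (Fin p) (Fin q) ℝ)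
    (N : Matrix (Fin p) (Fin r) ℝ) (v : Fin q → ℝ) (w : Fin r → ℝ) :
    (M *ᵥ v) ⬝ᵥ (N *ᵥ w) = v ⬝ᵥ ((Mᵀ * N) *ᵥ w) := by
  rw [dotProduct_mulVec, dotProduct_mulVec, ← vecMul_vecMul, ← vecMul_transpose]

/-- **Theorem 1.** Under the transition assumption and the controller assumption
(for the first `Nd'` data points), if the algebraic Riccati equation
`G1 = 0 ∧ G2 = 0` holds, then `f_{i,j} = 0` for all `i ≤ Nd'` and all `j ≤ Nd`. -/
theorem are_implies_estimation
    (n m Nd Nd' : ℕ) (hN : Nd' ≤ Nd)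
    (A : Matrix (Fin n) (Fin n) ℝ) (B : Matrix (Fin n) (Fin m) ℝ)
    (K : Matrix (Fin m) (Fin n) ℝ)
    (P Q : Matrix (Fin n) (Fin n) ℝ) (R : Matrix (Fin m) (Fin m) ℝ)
    (hP : P.IsSymm) (hQ : Q.IsSymm) (hR : R.IsSymm)
    (x0 x1 : Fin Nd → Fin n → ℝ) (u : Fin Nd → Fin m → ℝ)
    (htrans : ∀ i : Fin Nd, x1 i = A *ᵥ x0 i + B *ᵥ u i)
    (hctrl : ∀ i : Fin Nd, (i : ℕ) < Nd' → u i = -(K *ᵥ x0 i))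
    (hG1 : Aᵀ * P * A - P + Q - Kᵀ * (R + Bᵀ * P * B) * K = 0)
    (hG2 : Bᵀ * P * A - (R + Bᵀ * P * B) * K = 0) :
    ∀ i j : Fin Nd, (i : ℕ) < Nd' →
      x1 i ⬝ᵥ (P *ᵥ x1 j) + x0 i ⬝ᵥ ((Q - P) *ᵥ x0 j) + u i ⬝ᵥ (R *ᵥ u j) = 0 := by
  intro i j hi
  have h2 : Aᵀ * P * B - Kᵀ * (R + Bᵀ * P * B) = 0 := by
    have := congrArg Matrix.transpose hG2
    simpa [Matrix.transpose_sub, Matrix.transpose_mul, Matrix.transpose_add,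
      hP.eq, hR.eq, Matrix.mul_assoc] using this
  -- coefficient matrices
  have h1 : Aᵀ * P * A - P + Q - Kᵀ * ((R + Bᵀ * P * B) * K) = 0 := by
    rw [← Matrix.mul_assoc]; exact hG1
  have h2' : Aᵀ * P * B = Kᵀ * (R + Bᵀ * P * B) := by
    have := sub_eq_zero.mp h2; linear_combination (norm := noncomm_ring) this
  have hG2' : Bᵀ * P * A = (R + Bᵀ * P * B) * K := sub_eq_zero.mp hG2
  rw [htrans i, htrans j, hctrl i hi]
  set a := x0 i; set b := x0 j; set v := u j
  have e1 : (A *ᵥ a + B *ᵥ -(K *ᵥ a)) ⬝ᵥ (P *ᵥ (A *ᵥ b + B *ᵥ v))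
      = a ⬝ᵥ ((Aᵀ * P * A) *ᵥ b) + a ⬝ᵥ ((Aᵀ * P * B) *ᵥ v)
        - a ⬝ᵥ ((Kᵀ * (Bᵀ * P * A)) *ᵥ b) - a ⬝ᵥ ((Kᵀ * (Bᵀ * P * B)) *ᵥ v) := by
    simp only [Matrix.mulVec_add, Matrix.mulVec_neg, dotProduct_add, add_dotProduct,
      neg_dotProduct, dotProduct_neg, ← Matrix.mulVec_mulVec]
    simp only [aux_mulVec_dot, ← Matrix.mulVec_mulVec, Matrix.mul_assoc]
    ring
  have e3 : (-(K *ᵥ a)) ⬝ᵥ (R *ᵥ v) = - (a ⬝ᵥ ((Kᵀ * R) *ᵥ v)) := by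
    rw [neg_dotProduct, aux_mulVec_dot]
  have c1 : Aᵀ * P * A - Kᵀ * (Bᵀ * P * A) + (Q - P) = 0 := by
    rw [hG2']
    linear_combination (norm := noncomm_ring) h1
  have c2 : Aᵀ * P * B - Kᵀ * (Bᵀ * P * B) - Kᵀ * R = 0 := by
    rw [h2', Matrix.mul_add]
    abel
  calc (A *ᵥ a + B *ᵥ -(K *ᵥ a)) ⬝ᵥ (P *ᵥ (A *ᵥ b + B *ᵥ v))
        + a ⬝ᵥ ((Q - P) *ᵥ b) + (-(K *ᵥ a)) ⬝ᵥ (R *ᵥ v)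
      = a ⬝ᵥ ((Aᵀ * P * A - Kᵀ * (Bᵀ * P * A) + (Q - P)) *ᵥ b)
        + a ⬝ᵥ ((Aᵀ * P * B - Kᵀ * (Bᵀ * P * B) - Kᵀ * R) *ᵥ v) := by
        rw [e1, e3]
        simp only [Matrix.sub_mulVec, Matrix.add_mulVec, dotProduct_sub, dotProduct_add]
        ring
    _ = 0 := by rw [c1, c2]; simp
end

section
/- Suppose the transition assumption holds (x_i(1) = A x_i(0) + B u_i for all i = 1,…,N_d) and the controller assumption holds (u_i = −K x_i(0) for all i ≤ N'_d). Suppose moreover that the (n+m)×N_d matrix D whose j-th column is [x_j(0); u_j] has full row rank n+m, and that the n×N'_d matrix X'(0) whose i-th column is x_i(0) (i ≤ N'_d) has full row rank n. Then f_{i,j} = 0 for every i ∈ {1,…,N'_d} and j ∈ {1,…,N_d} if and only if the algebraic Riccati equation holds, i.e. G1 = 0 and G2 = 0. (Theorem 2) -/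
open Matrix

lemma eq_zero_of_vecMul_eq_zero' {ι q : Type*} [Fintype ι] [Fintype q]
    (M : Matrix ι q ℝ) (h : M.rank = Fintype.card ι) {v : ι → ℝ}
    (hv : v ᵥ* M = 0) : v = 0 := by
  have hinj : Function.Injective M.vecMul := by
    rw [Matrix.vecMul_injective_iff, linearIndependent_iff_card_eq_finrank_span]
    rw [Matrix.rank_eq_finrank_span_row] at h
    simpa [Set.finrank] using h.symm
  exact hinj (a₁ := v) (a₂ := 0) (by simpa using hv)

lemma quad_expand {n m : ℕ} (A P Q : Matrix (Fin n) (Fin n) ℝ) (B : Matrix (Fin n) (Fin m) ℝ)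
    (K : Matrix (Fin m) (Fin n) ℝ) (R : Matrix (Fin m) (Fin m) ℝ)
    (hP : P.IsSymm) (hQ : Q.IsSymm) (hR : R.IsSymm)
    (a c : Fin n → ℝ) (d : Fin m → ℝ) :
    (A *ᵥ a + B *ᵥ (-(K *ᵥ a))) ⬝ᵥ (P *ᵥ (A *ᵥ c + B *ᵥ d)) + a ⬝ᵥ ((Q - P) *ᵥ c)
      + (-(K *ᵥ a)) ⬝ᵥ (R *ᵥ d)
    = a ⬝ᵥ ((Aᵀ*P*A - P + Q - Kᵀ*(Bᵀ*P*A)) *ᵥ c + (Aᵀ*P*B - Kᵀ*(Bᵀ*P*B + R)) *ᵥ d) := by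
  rw [dotProduct_add]
  simp only [← Matrix.vecMul_transpose, Matrix.add_vecMul, Matrix.neg_vecMul,
    Matrix.vecMul_vecMul, add_dotProduct, neg_dotProduct, dotProduct_add, dotProduct_neg]
  simp only [← Matrix.dotProduct_mulVec]
  simp only [← Matrix.mulVec_transpose, Matrix.mulVec_mulVec, transpose_mul,
    transpose_transpose, transpose_sub, transpose_add, hP.eq, hQ.eq, hR.eq,
    Matrix.sub_mulVec, Matrix.add_mulVec, dotProduct_add, dotProduct_sub,
    Matrix.mul_assoc, Matrix.mul_add]
  ring

/-- **Theorem 2.** Under the transition and controller assumptions, if the data matrix `D`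
(columns `[x_j(0); u_j]`) has full row rank `n + m` and the matrix `X'(0)`
(columns `x_i(0)`, `i ≤ Nd'`) has full row rank `n`, then the estimated equation
`f_{i,j} = 0` (for all `i ≤ Nd'`, `j ≤ Nd`) is equivalent to the algebraic Riccati
equation `G1 = 0 ∧ G2 = 0`. -/
theorem estimation_equiv_are
    (n m Nd Nd' : ℕ) (hN : Nd' ≤ Nd)
    (A : Matrix (Fin n) (Fin n) ℝ) (B : Matrix (Fin n) (Fin m) ℝ)
    (K : Matrix (Fin m) (Fin n) ℝ)
    (P Q : Matrix (Fin n) (Fin n) ℝ) (R : Matrix (Fin m) (Fin m) ℝ)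
    (hP : P.IsSymm) (hQ : Q.IsSymm) (hR : R.IsSymm)
    (x0 x1 : Fin Nd → Fin n → ℝ) (u : Fin Nd → Fin m → ℝ)
    (htrans : ∀ i : Fin Nd, x1 i = A *ᵥ x0 i + B *ᵥ u i)
    (hctrl : ∀ i : Fin Nd, (i : ℕ) < Nd' → u i = -(K *ᵥ x0 i))
    (D : Matrix (Fin n ⊕ Fin m) (Fin Nd) ℝ)
    (hD : D = Matrix.of fun p j => Sum.elim (x0 j) (u j) p)
    (X0' : Matrix (Fin n) (Fin Nd') ℝ)
    (hX0' : X0' = Matrix.of fun k i => x0 (Fin.castLE hN i) k)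
    (hrankD : D.rank = n + m)
    (hrankX0' : X0'.rank = n) :
    (∀ i j : Fin Nd, (i : ℕ) < Nd' →
        x1 i ⬝ᵥ (P *ᵥ x1 j) + x0 i ⬝ᵥ ((Q - P) *ᵥ x0 j) + u i ⬝ᵥ (R *ᵥ u j) = 0)
      ↔ (Aᵀ * P * A - P + Q - Kᵀ * (R + Bᵀ * P * B) * K = 0 ∧
          Bᵀ * P * A - (R + Bᵀ * P * B) * K = 0) := by
  set S : Matrix (Fin n) (Fin n) ℝ := Aᵀ*P*A - P + Q - Kᵀ*(Bᵀ*P*A) with hS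
  set T : Matrix (Fin n) (Fin m) ℝ := Aᵀ*P*B - Kᵀ*(Bᵀ*P*B + R) with hT
  have hf : ∀ i j : Fin Nd, (i : ℕ) < Nd' →
      x1 i ⬝ᵥ (P *ᵥ x1 j) + x0 i ⬝ᵥ ((Q - P) *ᵥ x0 j) + u i ⬝ᵥ (R *ᵥ u j)
        = x0 i ⬝ᵥ (S *ᵥ x0 j + T *ᵥ u j) := by
    intro i j hi
    rw [htrans i, htrans j, hctrl i hi, hS, hT]
    exact quad_expand A P Q B K R hP hQ hR (x0 i) (x0 j) (u j)
  -- relation between (S, T) and (G1, G2)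
  have hG2 : Tᵀ = Bᵀ * P * A - (R + Bᵀ * P * B) * K := by
    rw [hT]
    simp only [transpose_sub, transpose_mul, transpose_add, transpose_transpose,
      hP.eq, hR.eq]
    simp only [Matrix.add_mul, Matrix.sub_mul, Matrix.mul_assoc]
    abel
  have hG1 : Aᵀ * P * A - P + Q - Kᵀ * (R + Bᵀ * P * B) * K
      = S + Kᵀ * (Bᵀ * P * A - (R + Bᵀ * P * B) * K) := by
    rw [hS]
    simp only [Matrix.mul_add, Matrix.mul_sub, Matrix.add_mul, Matrix.sub_mul, Matrix.mul_assoc]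
    abel
  have hSTiff : (S = 0 ∧ T = 0) ↔
      (Aᵀ * P * A - P + Q - Kᵀ * (R + Bᵀ * P * B) * K = 0 ∧
        Bᵀ * P * A - (R + Bᵀ * P * B) * K = 0) := by
    constructor
    · rintro ⟨h1, h2⟩
      have hg2 : Bᵀ * P * A - (R + Bᵀ * P * B) * K = 0 := by rw [← hG2, h2]; simp
      refine ⟨?_, hg2⟩
      rw [hG1, hg2, h1]; simp
    · rintro ⟨h1, h2⟩
      have hT0 : T = 0 := by
        have : Tᵀ = 0 := by rw [hG2, h2]
        calc T = Tᵀᵀ := (transpose_transpose T).symm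
          _ = 0 := by rw [this]; simp
      refine ⟨?_, hT0⟩
      have := hG1
      rw [h1, h2] at this
      simpa using this.symm
  rw [← hSTiff]
  constructor
  · intro h
    -- build the combined matrix M and show M * D = 0
    set M : Matrix (Fin n) (Fin n ⊕ Fin m) ℝ :=
      Matrix.of (fun p => Sum.elim (S p) (T p)) with hM
    have hMv : ∀ j : Fin Nd, M *ᵥ (fun c => D c j) = S *ᵥ x0 j + T *ᵥ u j := by
      intro j
      funext p
      simp [hM, hD, Matrix.mulVec, dotProduct, Fintype.sum_sum_type, Pi.add_apply]
    have hcol : ∀ j : Fin Nd, M *ᵥ (fun c => D c j) = 0 := by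
      intro j
      set v : Fin n → ℝ := M *ᵥ (fun c => D c j) with hv
      have hvX : v ᵥ* X0' = 0 := by
        funext i
        have hi : ((Fin.castLE hN i : Fin Nd) : ℕ) < Nd' := by
          exact i.isLt
        have := h (Fin.castLE hN i) j hi
        rw [hf _ j hi] at this
        simp only [Matrix.vecMul, dotProduct, hX0', Matrix.of_apply, Pi.zero_apply]
        rw [← this, hv, hMv j]
        simp [dotProduct, mul_comm]
      exact eq_zero_of_vecMul_eq_zero' X0' (by simpa using hrankX0') hvX
    have hrow : ∀ p : Fin n, M p = 0 := by
      intro p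
      apply eq_zero_of_vecMul_eq_zero' D (by simpa using hrankD)
      funext j
      have := congrFun (hcol j) p
      simpa [Matrix.mulVec, Matrix.vecMul, dotProduct] using this
    constructor
    · funext p k
      have := congrFun (hrow p) (Sum.inl k)
      simpa [hM] using this
    · funext p k
      have := congrFun (hrow p) (Sum.inr k)
      simpa [hM] using this
  · rintro ⟨h1, h2⟩ i j hi
    rw [hf i j hi, h1, h2]
    simp
end

section
/- Suppose the transition assumption holds (x_i(1) = A x_i(0) + B u_i for all i = 1,…,N_d) and the controller assumption holds (u_i = −K x_i(0) for all i ≤ N'_d). For each i let d_i = [x_i(0); u_i] ∈ ℝ^{n+m}. Suppose there exist k ∈ {1,…,N'_d} and real numbers c_i (i ∈ {1,…,N'_d}\{k}) such that d_k = Σ_{i≠k, i≤N'_d} c_i d_i. Then for every j ∈ {1,…,N_d} with j ≠ k one has f_{k,j} = Σ_{i≠k, i≤N'_d} c_i f_{i,j}, and f_{k,k} = Σ_{i≠k, i≤N'_d} Σ_{j≠k, j≤N'_d} c_i c_j f_{i,j}. (Lemma 1) -/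
open Matrix Finset

lemma bilin_sum_left {ι N : Type*} [Fintype N] (M : Matrix N N ℝ)
    (s : Finset ι) (c : ι → ℝ) (v : ι → N → ℝ) (w : N → ℝ) :
    (∑ i ∈ s, c i • v i) ⬝ᵥ (M *ᵥ w) = ∑ i ∈ s, c i * (v i ⬝ᵥ (M *ᵥ w)) := by
  simp only [dotProduct, Finset.sum_apply, Pi.smul_apply, smul_eq_mul,
    Finset.sum_mul, Finset.mul_sum]
  rw [Finset.sum_comm]
  exact Finset.sum_congr rfl fun i _ => Finset.sum_congr rfl fun k _ => by ring

lemma bilin_sum_right {ι N : Type*} [Fintype N] (M : Matrix N N ℝ)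
    (s : Finset ι) (c : ι → ℝ) (v : N → ℝ) (w : ι → N → ℝ) :
    v ⬝ᵥ (M *ᵥ ∑ j ∈ s, c j • w j) = ∑ j ∈ s, c j * (v ⬝ᵥ (M *ᵥ w j)) := by
  have h : M *ᵥ (∑ j ∈ s, c j • w j) = ∑ j ∈ s, c j • (M *ᵥ w j) := by
    rw [← mulVecLin_apply, map_sum]
    simp [mulVecLin_apply, mulVec_smul]
  rw [h]
  simp only [dotProduct, Finset.sum_apply, Pi.smul_apply, smul_eq_mul,
    Finset.mul_sum]
  rw [Finset.sum_comm]
  exact Finset.sum_congr rfl fun j _ => Finset.sum_congr rfl fun k _ => by ring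

/-- **Lemma 1.** Under the transition and controller assumptions, if the data vector
`d_k = [x_k(0); u_k]` (with `k ≤ Nd'`) is a linear combination of the other data vectors
`d_i` (`i ≤ Nd'`, `i ≠ k`), then the equations obtained from `d_k` are corresponding
linear combinations of the equations obtained from the other data vectors. -/
theorem lemma1_dependent_data
    (n m Nd Nd' : ℕ) (hN : Nd' ≤ Nd)
    (A : Matrix (Fin n) (Fin n) ℝ) (B : Matrix (Fin n) (Fin m) ℝ)
    (K : Matrix (Fin m) (Fin n) ℝ)
    (P Q : Matrix (Fin n) (Fin n) ℝ) (R : Matrix (Fin m) (Fin m) ℝ)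
    (hP : P.IsSymm) (hQ : Q.IsSymm) (hR : R.IsSymm)
    (x0 x1 : Fin Nd → Fin n → ℝ) (u : Fin Nd → Fin m → ℝ)
    (htrans : ∀ i : Fin Nd, x1 i = A *ᵥ x0 i + B *ᵥ u i)
    (hctrl : ∀ i : Fin Nd, (i : ℕ) < Nd' → u i = -(K *ᵥ x0 i))
    (f : Fin Nd → Fin Nd → ℝ)
    (hf : ∀ i j : Fin Nd,
      f i j = x1 i ⬝ᵥ (P *ᵥ x1 j) + x0 i ⬝ᵥ ((Q - P) *ᵥ x0 j) + u i ⬝ᵥ (R *ᵥ u j))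
    (d : Fin Nd → (Fin n ⊕ Fin m) → ℝ)
    (hd : ∀ i : Fin Nd, d i = Sum.elim (x0 i) (u i))
    (k : Fin Nd) (hk : (k : ℕ) < Nd')
    (c : Fin Nd → ℝ)
    (hcomb : d k = ∑ i ∈ univ.filter (fun i : Fin Nd => (i : ℕ) < Nd' ∧ i ≠ k),
        c i • d i) :
    (∀ j : Fin Nd, j ≠ k →
        f k j = ∑ i ∈ univ.filter (fun i : Fin Nd => (i : ℕ) < Nd' ∧ i ≠ k), c i * f i j) ∧
      f k k = ∑ i ∈ univ.filter (fun i : Fin Nd => (i : ℕ) < Nd' ∧ i ≠ k),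
          ∑ j ∈ univ.filter (fun j : Fin Nd => (j : ℕ) < Nd' ∧ j ≠ k),
            c i * c j * f i j := by
  set C : Matrix (Fin n) (Fin n ⊕ Fin m) ℝ := fromCols A B with hC
  set M : Matrix (Fin n ⊕ Fin m) (Fin n ⊕ Fin m) ℝ :=
    Cᵀ * P * C + fromBlocks (Q - P) 0 0 R with hM
  have key : ∀ i j : Fin Nd, f i j = d i ⬝ᵥ (M *ᵥ d j) := by
    intro i j
    rw [hf, hd, hd, htrans, htrans, hM]
    rw [add_mulVec, dotProduct_add, Matrix.mul_assoc, ← mulVec_mulVec, ← mulVec_mulVec,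
      ← fromCols_mulVec_sumElim A B (x0 j) (u j),
      ← fromCols_mulVec_sumElim A B (x0 i) (u i), ← hC]
    rw [show Sum.elim (x0 i) (u i) ⬝ᵥ Cᵀ *ᵥ (P *ᵥ C *ᵥ Sum.elim (x0 j) (u j))
        = (C *ᵥ Sum.elim (x0 i) (u i)) ⬝ᵥ (P *ᵥ C *ᵥ Sum.elim (x0 j) (u j)) by
      rw [dotProduct_mulVec, vecMul_transpose]]
    rw [fromBlocks_mulVec, sumElim_dotProduct_sumElim]
    simp only [Sum.elim_comp_inl, Sum.elim_comp_inr, zero_mulVec, add_zero, zero_add]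
    ring
  set s := univ.filter (fun i : Fin Nd => (i : ℕ) < Nd' ∧ i ≠ k) with hs
  constructor
  · intro j hj
    rw [key, hcomb, bilin_sum_left]
    exact Finset.sum_congr rfl fun i _ => by rw [key]
  · rw [key, hcomb, bilin_sum_left]
    refine Finset.sum_congr rfl fun i _ => ?_
    rw [bilin_sum_right, Finset.mul_sum]
    exact Finset.sum_congr rfl fun j _ => by rw [key]; ring
end

section
/- Suppose the algebraic Riccati equation holds (G1 = 0 and G2 = 0), x_i(1) = A x_i(0) + B u_i, x_j(1) = A x_j(0) + B u_j, and u_i = −K x_i(0). Let Δu_j = u_j + K x_j(0). Then f_{i,j} = x_i(0)^T (A^T P B − K^T (B^T P B + R)) Δu_j; in particular, since K satisfies (R + B^T P B) K = B^T P A under the ARE, f_{i,j} = 0. (Identity in the proof of Theorem 1') -/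
open Matrix

lemma dp_shift {n n' : ℕ} (M : Matrix (Fin n) (Fin n') ℝ) (x : Fin n' → ℝ)
    (w : Fin n → ℝ) : (M *ᵥ x) ⬝ᵥ w = x ⬝ᵥ (Mᵀ *ᵥ w) := by
  rw [dotProduct_comm, dotProduct_mulVec, ← mulVec_transpose, dotProduct_comm]

/-- Identity in the proof of Theorem 1': under the ARE and the transition assumptions,
with `u_i = -K x_i(0)` and `Δu_j = u_j + K x_j(0)`, one has
`f_{i,j} = x_i(0)ᵀ (Aᵀ P B - Kᵀ (Bᵀ P B + R)) Δu_j`; in particular `f_{i,j} = 0`. -/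
theorem theorem1'_identity
    (n m : ℕ)
    (A : Matrix (Fin n) (Fin n) ℝ) (B : Matrix (Fin n) (Fin m) ℝ)
    (K : Matrix (Fin m) (Fin n) ℝ)
    (P Q : Matrix (Fin n) (Fin n) ℝ) (R : Matrix (Fin m) (Fin m) ℝ)
    (hP : P.IsSymm) (hQ : Q.IsSymm) (hR : R.IsSymm)
    (hG1 : Aᵀ * P * A - P + Q - Kᵀ * (R + Bᵀ * P * B) * K = 0)
    (hG2 : Bᵀ * P * A - (R + Bᵀ * P * B) * K = 0)
    (xi0 xi1 xj0 xj1 : Fin n → ℝ) (ui uj : Fin m → ℝ)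
    (hxi : xi1 = A *ᵥ xi0 + B *ᵥ ui)
    (hxj : xj1 = A *ᵥ xj0 + B *ᵥ uj)
    (hui : ui = -(K *ᵥ xi0))
    (Δuj : Fin m → ℝ)
    (hΔuj : Δuj = uj + K *ᵥ xj0) :
    xi1 ⬝ᵥ (P *ᵥ xj1) + xi0 ⬝ᵥ ((Q - P) *ᵥ xj0) + ui ⬝ᵥ (R *ᵥ uj) =
        xi0 ⬝ᵥ ((Aᵀ * P * B - Kᵀ * (Bᵀ * P * B + R)) *ᵥ Δuj) ∧
      xi1 ⬝ᵥ (P *ᵥ xj1) + xi0 ⬝ᵥ ((Q - P) *ᵥ xj0) + ui ⬝ᵥ (R *ᵥ uj) = 0 := by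
  have h2 : (R + Bᵀ * P * B) * K = Bᵀ * P * A := (sub_eq_zero.mp hG2).symm
  have hD : Aᵀ * P * B - Kᵀ * (Bᵀ * P * B + R) = 0 := by
    have ht := congrArg Matrix.transpose hG2
    simp only [transpose_sub, transpose_mul, transpose_add, transpose_transpose,
      transpose_zero, hP.eq, hR.eq] at ht
    calc Aᵀ * P * B - Kᵀ * (Bᵀ * P * B + R)
        = Aᵀ * (P * B) - Kᵀ * (Bᵀ * (P * B) + R) := by
          simp [Matrix.mul_assoc]
      _ = 0 := by
          simpa [Matrix.mul_assoc, add_comm, Matrix.add_mul] using ht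
  have hCy : (A - B * K)ᵀ * P * A + (Q - P) = 0 := by
    have e1 : (A - B * K)ᵀ * P * A + (Q - P)
        = Aᵀ * P * A - Kᵀ * (Bᵀ * (P * A)) + (Q - P) := by
      simp only [transpose_sub, transpose_mul, Matrix.sub_mul]
      simp [Matrix.mul_assoc]
    have e2 : Bᵀ * (P * A) = (R + Bᵀ * P * B) * K := by
      rw [← Matrix.mul_assoc, h2]
    rw [e1, e2]
    calc Aᵀ * P * A - Kᵀ * ((R + Bᵀ * P * B) * K) + (Q - P)
        = Aᵀ * P * A - P + Q - Kᵀ * (R + Bᵀ * P * B) * K := by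
          simp only [Matrix.mul_assoc]; abel
      _ = 0 := hG1
  have hCv : (A - B * K)ᵀ * P * B - Kᵀ * R = 0 := by
    have e1 : (A - B * K)ᵀ * P * B - Kᵀ * R
        = Aᵀ * P * B - Kᵀ * (Bᵀ * P * B + R) := by
      simp only [transpose_sub, transpose_mul, Matrix.sub_mul, Matrix.mul_add]
      simp only [Matrix.mul_assoc]
      abel
    rw [e1, hD]
  have hxi' : xi1 = (A - B * K) *ᵥ xi0 := by
    rw [hxi, hui]
    simp [sub_mulVec, ← mulVec_mulVec, sub_eq_add_neg, add_mulVec, neg_mulVec, mulVec_neg]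
  have hzero : xi1 ⬝ᵥ (P *ᵥ xj1) + xi0 ⬝ᵥ ((Q - P) *ᵥ xj0) + ui ⬝ᵥ (R *ᵥ uj) = 0 := by
    have ey : xi0 ⬝ᵥ (((A - B * K)ᵀ * P * A + (Q - P)) *ᵥ xj0) = 0 := by
      rw [hCy]; simp
    have ev : xi0 ⬝ᵥ (((A - B * K)ᵀ * P * B - Kᵀ * R) *ᵥ uj) = 0 := by
      rw [hCv]; simp
    rw [hxi', hxj, hui]
    simp only [transpose_sub, transpose_mul, transpose_transpose, mulVec_add, mulVec_sub,
      add_mulVec, sub_mulVec, ← mulVec_mulVec,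
      dotProduct_add, dotProduct_sub, add_dotProduct, sub_dotProduct, neg_dotProduct,
      dotProduct_neg, dp_shift] at ey ev ⊢
    linarith [ey, ev]
  refine ⟨?_, hzero⟩
  rw [hzero, hD]
  simp
end

section
/- Suppose the transition assumption holds (x_i(1) = A x_i(0) + B u_i for all i = 1,…,N_d) and the controller assumption holds (u_i = −K x_i(0) for all i ≤ N'_d). Let D be the (n+m)×N_d matrix whose j-th column is [x_j(0); u_j], let X'(0) be the n×N'_d matrix whose i-th column is x_i(0) (i ≤ N'_d), and let U' be the m×N'_d matrix whose i-th column is u_i (i ≤ N'_d). Then the N'_d×N_d matrix F with entries F_{i,j} = f_{i,j} satisfies F = [X'(0); U']^T M D, where M is the (n+m)×(n+m) block matrix with blocks G1, G2^T in the first block row and G2, 0 in the second block row. (Equation (19)) -/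
open Matrix

theorem key (n m : ℕ)
    (A : Matrix (Fin n) (Fin n) ℝ) (B : Matrix (Fin n) (Fin m) ℝ)
    (K : Matrix (Fin m) (Fin n) ℝ)
    (P Q : Matrix (Fin n) (Fin n) ℝ) (R : Matrix (Fin m) (Fin m) ℝ)
    (hP : P.IsSymm) (hR : R.IsSymm)
    (a xj : Fin n → ℝ) (b uj : Fin m → ℝ)
    (hb : b = -(K *ᵥ a)) :
    (A *ᵥ a + B *ᵥ b) ⬝ᵥ (P *ᵥ (A *ᵥ xj + B *ᵥ uj)) + a ⬝ᵥ ((Q - P) *ᵥ xj) + b ⬝ᵥ (R *ᵥ uj)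
      = a ⬝ᵥ ((Aᵀ * P * A - P + Q - Kᵀ * (R + Bᵀ * P * B) * K) *ᵥ xj)
        + a ⬝ᵥ ((Bᵀ * P * A - (R + Bᵀ * P * B) * K)ᵀ *ᵥ uj)
        + b ⬝ᵥ ((Bᵀ * P * A - (R + Bᵀ * P * B) * K) *ᵥ xj) := by
  subst hb
  simp only [transpose_sub, transpose_add, transpose_mul, transpose_transpose, hP.eq, hR.eq,
    Matrix.sub_mulVec, Matrix.add_mulVec, Matrix.mulVec_add, Matrix.mulVec_sub,
    Matrix.neg_mulVec, Matrix.mulVec_neg, neg_dotProduct, dotProduct_neg,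
    dotProduct_add, add_dotProduct, dotProduct_sub, sub_dotProduct,
    ← Matrix.mulVec_mulVec, Matrix.dotProduct_mulVec, Matrix.vecMul_vecMul,
    Matrix.sub_vecMul, Matrix.add_vecMul, Matrix.neg_vecMul, Matrix.vecMul_neg,
    Matrix.vecMul_mulVec, Matrix.mul_assoc, Matrix.mul_add, Matrix.add_mul,
    Matrix.mul_sub, Matrix.sub_mul]
  ring

/-- Equation (19): under the transition and controller assumptions, the matrix `F` of
the values `f_{i,j}` factors as `F = [X'(0); U']ᵀ M D`, where `M` is the block matrix
`[[G1, G2ᵀ], [G2, 0]]`. -/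
theorem F_factorization
    (n m Nd Nd' : ℕ) (hN : Nd' ≤ Nd)
    (A : Matrix (Fin n) (Fin n) ℝ) (B : Matrix (Fin n) (Fin m) ℝ)
    (K : Matrix (Fin m) (Fin n) ℝ)
    (P Q : Matrix (Fin n) (Fin n) ℝ) (R : Matrix (Fin m) (Fin m) ℝ)
    (hP : P.IsSymm) (hQ : Q.IsSymm) (hR : R.IsSymm)
    (x0 x1 : Fin Nd → Fin n → ℝ) (u : Fin Nd → Fin m → ℝ)
    (htrans : ∀ i : Fin Nd, x1 i = A *ᵥ x0 i + B *ᵥ u i)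
    (hctrl : ∀ i : Fin Nd, (i : ℕ) < Nd' → u i = -(K *ᵥ x0 i))
    (F : Matrix (Fin Nd') (Fin Nd) ℝ)
    (hF : F = Matrix.of fun i j =>
      x1 (Fin.castLE hN i) ⬝ᵥ (P *ᵥ x1 j) +
        x0 (Fin.castLE hN i) ⬝ᵥ ((Q - P) *ᵥ x0 j) +
        u (Fin.castLE hN i) ⬝ᵥ (R *ᵥ u j))
    (D : Matrix (Fin n ⊕ Fin m) (Fin Nd) ℝ)
    (hD : D = Matrix.of fun p j => Sum.elim (x0 j) (u j) p)
    (X0' : Matrix (Fin n) (Fin Nd') ℝ)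
    (hX0' : X0' = Matrix.of fun k i => x0 (Fin.castLE hN i) k)
    (U' : Matrix (Fin m) (Fin Nd') ℝ)
    (hU' : U' = Matrix.of fun k i => u (Fin.castLE hN i) k)
    (G1 : Matrix (Fin n) (Fin n) ℝ) (G2 : Matrix (Fin m) (Fin n) ℝ)
    (hG1 : G1 = Aᵀ * P * A - P + Q - Kᵀ * (R + Bᵀ * P * B) * K)
    (hG2 : G2 = Bᵀ * P * A - (R + Bᵀ * P * B) * K) :
    F = (Matrix.fromRows X0' U')ᵀ * Matrix.fromBlocks G1 G2ᵀ G2 0 * D := by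
  subst hF hD hG1 hG2
  ext i j
  set a := x0 (Fin.castLE hN i) with ha
  set b := u (Fin.castLE hN i) with hbdef
  have hb : b = -(K *ᵥ a) := hctrl _ (by simpa using i.isLt)
  set M := Matrix.fromBlocks (Aᵀ * P * A - P + Q - Kᵀ * (R + Bᵀ * P * B) * K)
    (Bᵀ * P * A - (R + Bᵀ * P * B) * K)ᵀ (Bᵀ * P * A - (R + Bᵀ * P * B) * K) 0 with hM
  have hRHS : ((Matrix.fromRows X0' U')ᵀ * M *
      (Matrix.of fun p j => Sum.elim (x0 j) (u j) p)) i j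
      = Sum.elim a b ⬝ᵥ (M *ᵥ Sum.elim (x0 j) (u j)) := by
    rw [Matrix.mul_assoc, Matrix.mul_apply, dotProduct]
    refine Finset.sum_congr rfl fun p _ => ?_
    congr 1
    cases p <;> simp [hX0', hU', ha, hbdef]
  rw [hRHS, Matrix.fromBlocks_mulVec, sumElim_dotProduct_sumElim]
  simp only [Matrix.of_apply, Matrix.zero_mulVec, add_zero, dotProduct_add,
    Sum.elim_comp_inl, Sum.elim_comp_inr]
  rw [htrans, htrans, ← ha, ← hbdef]
  have := key n m A B K P Q R hP hR a (x0 j) b (u j) hb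
  linarith [this]
end
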